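/- Let n ∈ ℕ, let a, ā, x, x̄ ∈ ℝⁿ and δ, ε ∈ ℝⁿ with δᵢ ≥ 0, εᵢ ≥ 0, |āᵢ − aᵢ| ≤ δᵢ and |x̄ᵢ − xᵢ| ≤ εᵢ for all i. Let s, η, μ, b ∈ ℝ satisfy |s − ∑ᵢ āᵢx̄ᵢ| ≤ η and μ ≥ η + ∑ᵢ (|āᵢ|·εᵢ + |x̄ᵢ|·δᵢ + δᵢ·εᵢ). If s − μ ≥ b, then ∑ᵢ aᵢxᵢ ≥ b. -/
import Mathlib

/-- Safe acceptance direction of the floating-point feasibility check via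
running error analysis: `s` approximates `∑ āᵢx̄ᵢ` with computation error at
most `η`, and `μ` bounds the total error.  If `s - μ ≥ b`, then the exact
activity satisfies `b ≤ ∑ aᵢxᵢ`. -/
theorem safe_feasibility_accept
    (n : ℕ) (a abar x xbar δ ε : Fin n → ℝ)
    (hδ : ∀ i, 0 ≤ δ i) (hε : ∀ i, 0 ≤ ε i)
    (ha : ∀ i, |abar i - a i| ≤ δ i) (hx : ∀ i, |xbar i - x i| ≤ ε i)
    (s η μ b : ℝ)
    (hs : |s - ∑ i, abar i * xbar i| ≤ η)
    (hμ : η + ∑ i, (|abar i| * ε i + |xbar i| * δ i + δ i * ε i) ≤ μ)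
    (hacc : b ≤ s - μ) :
    b ≤ ∑ i, a i * x i := by
  have key : ∀ i, |abar i * xbar i - a i * x i|
      ≤ |abar i| * ε i + |xbar i| * δ i + δ i * ε i := by
    intro i
    have h1 : abar i * xbar i - a i * x i
        = abar i * (xbar i - x i) + xbar i * (abar i - a i)
          - (abar i - a i) * (xbar i - x i) := by ring
    rw [h1]
    calc |abar i * (xbar i - x i) + xbar i * (abar i - a i)
          - (abar i - a i) * (xbar i - x i)|
        ≤ |abar i * (xbar i - x i) + xbar i * (abar i - a i)|
          + |(abar i - a i) * (xbar i - x i)| := abs_sub _ _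
      _ ≤ |abar i * (xbar i - x i)| + |xbar i * (abar i - a i)|
          + |(abar i - a i) * (xbar i - x i)| := by
            gcongr; exact abs_add_le _ _
      _ ≤ |abar i| * ε i + |xbar i| * δ i + δ i * ε i := by
            rw [abs_mul, abs_mul, abs_mul]
            gcongr <;> first | exact hx i | exact ha i | exact hδ i | exact hε i
  have hsum : |∑ i, abar i * xbar i - ∑ i, a i * x i|
      ≤ ∑ i, (|abar i| * ε i + |xbar i| * δ i + δ i * ε i) := by
    rw [← Finset.sum_sub_distrib]
    exact (Finset.abs_sum_le_sum_abs _ _).trans (Finset.sum_le_sum fun i _ => key i)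
  have h1 := abs_le.mp hs
  have h2 := abs_le.mp hsum
  linarith [h1.1, h2.1, hμ, hacc]
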